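/- Let K be a nonempty subset of a metric space (X,d), let T, f : K → K be self-maps, and let m be a positive integer. Suppose there is a monotonically increasing continuous function φ : [0,∞) → [0,∞) with φ(t) < t for all t > 0 such that for all x, y ∈ K, d(T^m x, T^m y) ≤ φ( max{ d(fx,fy), d(T^m x, fx), d(T^m y, fy), (1/2)[d(T^m x, fy) + d(fx, T^m y)] } ), and that the closure of T^m(K) is contained in f(K). If either closure(T^m(K)) or f(K) is a complete metric subspace and the pair (T^m, f) is weakly compatible, then T^m and f have a unique common fixed point z in K. Moreover, if in addition T and f commute at every point of F(T^m) ∩ F(f), then z is also the unique common fixed point of T and f. -/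
import Mathlib

open Filter Topology

/-- Theorem on iterated mappings: `T^[m]` and `f` have a unique common fixed point `z`;
if in addition `T` and `f` commute on `F(T^[m]) ∩ F(f)`, then `z` is also the unique
common fixed point of `T` and `f`. -/
theorem common_fixed_point_iterate
    {X : Type*} [MetricSpace X] (K : Set X) (hK : K.Nonempty)
    (T f : X → X) (m : ℕ) (hm : 1 ≤ m)
    (hT : Set.MapsTo T K K) (hf : Set.MapsTo f K K)
    (hsub : closure (T^[m] '' K) ⊆ f '' K)
    (φ : ℝ → ℝ)
    (hφmono : MonotoneOn φ (Set.Ici 0))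
    (hφcont : ContinuousOn φ (Set.Ici 0))
    (hφnonneg : ∀ t ≥ (0 : ℝ), 0 ≤ φ t)
    (hφlt : ∀ t > (0 : ℝ), φ t < t)
    (hcontr : ∀ x ∈ K, ∀ y ∈ K,
      dist (T^[m] x) (T^[m] y) ≤ φ
        (max (max (dist (f x) (f y)) (dist (T^[m] x) (f x)))
          (max (dist (T^[m] y) (f y)) ((dist (T^[m] x) (f y) + dist (f x) (T^[m] y)) / 2))))
    (hcomplete : IsComplete (closure (T^[m] '' K)) ∨ IsComplete (f '' K))
    (hwc : ∀ x ∈ K, T^[m] x = f x → T^[m] (f x) = f (T^[m] x)) :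
    ∃ z, (z ∈ K ∧ T^[m] z = z ∧ f z = z) ∧
      (∀ w, w ∈ K ∧ T^[m] w = w ∧ f w = w → w = z) ∧
      ((∀ x ∈ K, T^[m] x = x → f x = x → T (f x) = f (T x)) →
        (T z = z ∧ f z = z ∧ ∀ w, w ∈ K ∧ T w = w ∧ f w = w → w = z)) := by
  classical
  obtain ⟨x0, hx0⟩ := hK
  obtain ⟨S, hS⟩ : ∃ S : X → X, S = T^[m] := ⟨_, rfl⟩
  simp only [← hS] at hcontr hsub hwc hcomplete ⊢
  -- basic helpers
  have hSK : ∀ v ∈ K, S v ∈ K := by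
    intro v hv; rw [hS]; exact Set.MapsTo.iterate hT m hv
  have hzero : ∀ c : ℝ, 0 ≤ c → c ≤ φ c → c = 0 := by
    intro c hc hle
    by_contra hne
    have hc' : 0 < c := lt_of_le_of_ne hc (Ne.symm hne)
    exact absurd hle (not_le.mpr (hφlt c hc'))
  have hmono' : ∀ a b : ℝ, 0 ≤ a → a ≤ b → φ a ≤ φ b := fun a b ha hab =>
    hφmono ha (ha.trans hab) hab
  -- choice of preimages under f
  have hex : ∀ v : X, ∃ u : X, v ∈ K → (u ∈ K ∧ f u = S v) := by
    intro v
    by_cases hv : v ∈ K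
    · obtain ⟨u, hu, hfu⟩ := hsub (subset_closure ⟨v, hv, rfl⟩)
      exact ⟨u, fun _ => ⟨hu, hfu⟩⟩
    · exact ⟨x0, fun h => absurd h hv⟩
  choose g hg using hex
  obtain ⟨xs, hxs0, hxsucc⟩ : ∃ xs : ℕ → X, xs 0 = x0 ∧ ∀ n, xs (n+1) = g (xs n) :=
    ⟨fun n => g^[n] x0, rfl, fun n => Function.iterate_succ_apply' g n x0⟩
  have hxK : ∀ n, xs n ∈ K := by
    intro n; induction n with
    | zero => rw [hxs0]; exact hx0
    | succ n ih => rw [hxsucc]; exact (hg _ ih).1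
  have hfx : ∀ n, f (xs (n+1)) = S (xs n) := by
    intro n; rw [hxsucc]; exact (hg _ (hxK n)).2
  obtain ⟨y, hy⟩ : ∃ y : ℕ → X, ∀ n, y n = S (xs n) := ⟨_, fun _ => rfl⟩
  obtain ⟨d, hd⟩ : ∃ d : ℕ → ℝ, ∀ n, d n = dist (y n) (y (n+1)) := ⟨_, fun _ => rfl⟩
  have hd0 : ∀ n, 0 ≤ d n := by intro n; rw [hd]; exact dist_nonneg
  -- key contractive inequality along the sequence
  have key : ∀ a b : ℕ, dist (y (a+1)) (y (b+1)) ≤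
      φ (max (max (dist (y a) (y b)) (dist (y (a+1)) (y a)))
          (max (dist (y (b+1)) (y b)) ((dist (y (a+1)) (y b) + dist (y a) (y (b+1))) / 2))) := by
    intro a b
    have h := hcontr (xs (a+1)) (hxK _) (xs (b+1)) (hxK _)
    rw [hfx a, hfx b] at h
    simpa only [← hy] using h
  -- the distances d n are antitone and contract
  have hdsucc : ∀ n, d (n+1) ≤ d n ∧ d (n+1) ≤ φ (d n) := by
    intro n
    have h := key n (n+1)
    have e1 : dist (y n) (y (n+1)) = d n := (hd n).symm
    have e2 : dist (y (n+1)) (y n) = d n := by rw [dist_comm]; exact (hd n).symm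
    have e3 : dist (y (n+1+1)) (y (n+1)) = d (n+1) := by rw [dist_comm]; exact (hd (n+1)).symm
    have e4 : dist (y (n+1)) (y (n+1)) = 0 := dist_self _
    have e5 : dist (y n) (y (n+1+1)) ≤ d n + d (n+1) := by
      calc dist (y n) (y (n+1+1)) ≤ dist (y n) (y (n+1)) + dist (y (n+1)) (y (n+1+1)) :=
            dist_triangle _ _ _
        _ = d n + d (n+1) := by rw [← hd, ← hd]
    rw [e1, e2, e3, e4] at h
    have hn0 := hd0 n; have hn1 := hd0 (n+1)
    have harg : max (max (d n) (d n)) (max (d (n+1)) ((0 + dist (y n) (y (n+1+1))) / 2))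
        ≤ max (d n) (d (n+1)) := by
      apply max_le (max_le (le_max_left _ _) (le_max_left _ _))
        (max_le (le_max_right _ _) ?_)
      rcases le_total (d n) (d (n+1)) with hc | hc
      · have := le_max_right (d n) (d (n+1)); rw [zero_add]; linarith
      · have := le_max_left (d n) (d (n+1)); rw [zero_add]; linarith
    have hargnn : (0:ℝ) ≤ max (max (d n) (d n)) (max (d (n+1)) ((0 + dist (y n) (y (n+1+1))) / 2)) :=
      le_max_of_le_left (le_max_left _ _ |>.trans' hn0)
    have hmain := h.trans (hmono' _ _ hargnn harg)
    rw [← hd (n+1)] at hmain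
    rcases le_total (d (n+1)) (d n) with hle | hle
    · exact ⟨hle, by rwa [max_eq_left hle] at hmain⟩
    · rw [max_eq_right hle] at hmain
      have h0 : d (n+1) = 0 := hzero _ (hd0 _) hmain
      exact ⟨by rw [h0]; exact hd0 n, by rw [h0]; exact hφnonneg _ (hd0 n)⟩
  have hanti : Antitone d := antitone_nat_of_succ_le (fun n => (hdsucc n).1)
  -- d tends to 0
  have htends0 : Tendsto d atTop (𝓝 0) := by
    have hbdd : BddBelow (Set.range d) := ⟨0, fun a ⟨n, hn⟩ => hn ▸ hd0 n⟩
    have hlim : Tendsto d atTop (𝓝 (⨅ n, d n)) := tendsto_atTop_ciInf hanti hbdd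
    have hr0 : 0 ≤ ⨅ n, d n := le_ciInf hd0
    have h1 : Tendsto (fun n => d (n+1)) atTop (𝓝 (⨅ n, d n)) :=
      hlim.comp (tendsto_add_atTop_nat 1)
    have h2 : Tendsto (fun n => φ (d n)) atTop (𝓝 (φ (⨅ n, d n))) :=
      (hφcont _ hr0).tendsto.comp
        (tendsto_nhdsWithin_of_tendsto_nhds_of_eventually_within _ hlim
          (Eventually.of_forall (fun n => hd0 n)))
    have hle : (⨅ n, d n) ≤ φ (⨅ n, d n) :=
      le_of_tendsto_of_tendsto' h1 h2 (fun n => (hdsucc n).2)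
    have : (⨅ n, d n) = 0 := hzero _ hr0 hle
    rwa [this] at hlim
  -- Cauchy
  have hcauchy : CauchySeq y := by
    rw [Metric.cauchySeq_iff']
    intro ε hε
    have hε' : 0 < ε/3 := by positivity
    have hcw : Tendsto φ (𝓝[Set.Ici 0] (ε/3)) (𝓝 (φ (ε/3))) := (hφcont _ hε'.le).tendsto
    rw [Metric.tendsto_nhdsWithin_nhds] at hcw
    have hgap : 0 < ε/3 - φ (ε/3) := sub_pos.mpr (hφlt _ hε')
    obtain ⟨η, hη, hcont⟩ := hcw ((ε/3 - φ (ε/3))/2) (by positivity)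
    set δ := min (η/4) ((ε/3 - φ (ε/3))/2) with hδdef
    have hδpos : 0 < δ := lt_min (by positivity) (by positivity)
    have hδle1 : δ ≤ η/4 := min_le_left _ _
    have hδle2 : δ ≤ (ε/3 - φ (ε/3))/2 := min_le_right _ _
    have hφbound : φ (ε/3 + 2*δ) ≤ ε/3 - δ := by
      have h1 : dist (ε/3 + 2*δ) (ε/3) < η := by
        rw [Real.dist_eq, abs_of_nonneg (by linarith)]
        linarith
      have h2 := hcont (Set.mem_Ici.mpr (by linarith)) h1
      rw [Real.dist_eq] at h2
      have h3 := (abs_lt.mp h2).2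
      linarith
    obtain ⟨N, hN⟩ := (Metric.tendsto_atTop.mp htends0) δ hδpos
    have hdle : ∀ n, N ≤ n → d n ≤ δ := by
      intro n hn
      have := hN n hn
      rw [Real.dist_eq, sub_zero, abs_of_nonneg (hd0 n)] at this
      exact this.le
    have claim : ∀ p : ℕ, dist (y (N+p)) (y N) ≤ ε/3 + δ := by
      intro p
      induction p with
      | zero => simp; linarith
      | succ p ih =>
        have hdN : d N ≤ δ := hdle N le_rfl
        have hdNp : d (N+p) ≤ δ := hdle _ (Nat.le_add_right _ _)
        have h := key N (N+p)
        have t1 : dist (y N) (y (N+p)) ≤ ε/3 + δ := by rw [dist_comm]; exact ih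
        have t2 : dist (y (N+1)) (y N) ≤ δ := by
          rw [dist_comm, ← hd]; exact hdN
        have t3 : dist (y (N+p+1)) (y (N+p)) ≤ δ := by
          rw [dist_comm, ← hd]; exact hdNp
        have t4 : dist (y (N+1)) (y (N+p)) ≤ ε/3 + 2*δ := by
          calc dist (y (N+1)) (y (N+p)) ≤ dist (y (N+1)) (y N) + dist (y N) (y (N+p)) :=
                dist_triangle _ _ _
            _ ≤ δ + (ε/3 + δ) := add_le_add t2 t1
            _ = ε/3 + 2*δ := by ring
        have t5 : dist (y N) (y (N+p+1)) ≤ ε/3 + 2*δ := by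
          calc dist (y N) (y (N+p+1)) ≤ dist (y N) (y (N+p)) + dist (y (N+p)) (y (N+p+1)) :=
                dist_triangle _ _ _
            _ ≤ (ε/3 + δ) + δ := by
                have : dist (y (N+p)) (y (N+p+1)) = d (N+p) := (hd _).symm
                rw [this]; exact add_le_add t1 hdNp
            _ = ε/3 + 2*δ := by ring
        have harg : max (max (dist (y N) (y (N+p))) (dist (y (N+1)) (y N)))
            (max (dist (y (N+p+1)) (y (N+p)))
              ((dist (y (N+1)) (y (N+p)) + dist (y N) (y (N+p+1))) / 2)) ≤ ε/3 + 2*δ := by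
          apply max_le (max_le (by linarith) (by linarith))
            (max_le (by linarith) (by linarith))
        have hargnn : (0:ℝ) ≤ max (max (dist (y N) (y (N+p))) (dist (y (N+1)) (y N)))
            (max (dist (y (N+p+1)) (y (N+p)))
              ((dist (y (N+1)) (y (N+p)) + dist (y N) (y (N+p+1))) / 2)) :=
          le_max_of_le_left (le_max_of_le_left dist_nonneg)
        have h2 : dist (y (N+p+1)) (y (N+1)) ≤ ε/3 - δ := by
          rw [dist_comm]
          exact h.trans ((hmono' _ _ hargnn harg).trans hφbound)
        calc dist (y (N+(p+1))) (y N) ≤ dist (y (N+p+1)) (y (N+1)) + dist (y (N+1)) (y N) :=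
              dist_triangle _ _ _
          _ ≤ (ε/3 - δ) + δ := add_le_add h2 t2
          _ ≤ ε/3 + δ := by linarith
    refine ⟨N, fun n hn => ?_⟩
    obtain ⟨p, rfl⟩ := Nat.exists_eq_add_of_le hn
    calc dist (y (N+p)) (y N) ≤ ε/3 + δ := claim p
      _ < ε := by
        have : (0:ℝ) ≤ φ (ε/3) := hφnonneg _ hε'.le
        linarith
  -- convergence of the sequence to a point of f '' K
  have hymem : ∀ n, y n ∈ S '' K := fun n => ⟨xs n, hxK n, (hy n).symm⟩
  obtain ⟨z, hzf, htend⟩ : ∃ z ∈ f '' K, Tendsto y atTop (𝓝 z) := by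
    rcases hcomplete with hc | hc
    · obtain ⟨z, hz, h⟩ := cauchySeq_tendsto_of_isComplete hc
        (fun n => subset_closure (hymem n)) hcauchy
      exact ⟨z, hsub hz, h⟩
    · obtain ⟨z, hz, h⟩ := cauchySeq_tendsto_of_isComplete hc
        (fun n => hsub (subset_closure (hymem n))) hcauchy
      exact ⟨z, hz, h⟩
  obtain ⟨u, huK, hfu⟩ := hzf
  have hzK : z ∈ K := hfu ▸ hf huK
  -- coincidence point: S u = z
  have hSu : S u = z := by
    have hAle : ∀ n, dist (y (n+1)) (S u) ≤
        φ (max (max (dist (y n) z) (dist (y (n+1)) (y n)))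
          (max (dist (S u) z) ((dist (y (n+1)) z + dist (y n) (S u)) / 2))) := by
      intro n
      have h := hcontr (xs (n+1)) (hxK _) u huK
      rw [hfx n, hfu] at h
      simpa only [← hy] using h
    have ht1 : Tendsto (fun n => y (n+1)) atTop (𝓝 z) := htend.comp (tendsto_add_atTop_nat 1)
    have ha1 : Tendsto (fun n => dist (y n) z) atTop (𝓝 0) := by
      simpa using htend.dist (tendsto_const_nhds (x := z))
    have ha2 : Tendsto (fun n => dist (y (n+1)) (y n)) atTop (𝓝 0) := by
      simpa using ht1.dist htend
    have ha3 : Tendsto (fun n => dist (y (n+1)) z) atTop (𝓝 0) := by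
      simpa using ht1.dist (tendsto_const_nhds (x := z))
    have ha4 : Tendsto (fun n => dist (y n) (S u)) atTop (𝓝 (dist z (S u))) :=
      htend.dist tendsto_const_nhds
    have hA : Tendsto (fun n => max (max (dist (y n) z) (dist (y (n+1)) (y n)))
        (max (dist (S u) z) ((dist (y (n+1)) z + dist (y n) (S u)) / 2))) atTop
        (𝓝 (max (max 0 0) (max (dist (S u) z) ((0 + dist z (S u)) / 2)))) :=
      (ha1.max ha2).max (tendsto_const_nhds.max ((ha3.add ha4).div_const 2))
    have hval : max (max (0:ℝ) 0) (max (dist (S u) z) ((0 + dist z (S u)) / 2))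
        = dist (S u) z := by
      rw [dist_comm z (S u), max_self, zero_add,
        max_eq_left (half_le_self dist_nonneg), max_eq_right dist_nonneg]
    rw [hval] at hA
    have hφA : Tendsto (fun n => φ (max (max (dist (y n) z) (dist (y (n+1)) (y n)))
        (max (dist (S u) z) ((dist (y (n+1)) z + dist (y n) (S u)) / 2)))) atTop
        (𝓝 (φ (dist (S u) z))) :=
      (hφcont _ dist_nonneg).tendsto.comp
        (tendsto_nhdsWithin_of_tendsto_nhds_of_eventually_within _ hA
          (Eventually.of_forall (fun n =>
            le_max_of_le_left (le_max_of_le_left dist_nonneg))))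
    have hlim2 : Tendsto (fun n => dist (y (n+1)) (S u)) atTop (𝓝 (dist z (S u))) :=
      ht1.dist tendsto_const_nhds
    have hle : dist z (S u) ≤ φ (dist (S u) z) :=
      le_of_tendsto_of_tendsto' hlim2 hφA hAle
    rw [dist_comm] at hle
    exact dist_eq_zero.mp (hzero _ dist_nonneg hle)
  -- weak compatibility gives S z = f z
  have hSzfz : S z = f z := by
    have h := hwc u huK (hSu.trans hfu.symm)
    rw [hfu, hSu] at h
    exact h
  -- z is a fixed point of S
  have hSz : S z = z := by
    have h := hcontr u huK z hzK
    rw [hfu, hSu, ← hSzfz, dist_self, dist_self] at h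
    have hnn : (0:ℝ) ≤ dist z (S z) := dist_nonneg
    have harg : max (max (dist z (S z)) 0) (max 0 ((dist z (S z) + dist z (S z)) / 2))
        ≤ dist z (S z) := by
      apply max_le (max_le le_rfl hnn) (max_le hnn (by linarith))
    have hargnn : (0:ℝ) ≤ max (max (dist z (S z)) 0)
        (max 0 ((dist z (S z) + dist z (S z)) / 2)) :=
      le_max_of_le_left (le_max_of_le_left hnn)
    have hle : dist z (S z) ≤ φ (dist z (S z)) := h.trans (hmono' _ _ hargnn harg)
    exact (dist_eq_zero.mp (hzero _ hnn hle)).symm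
  have hfz : f z = z := hSzfz ▸ hSz
  -- uniqueness of the common fixed point of S and f
  have huniq : ∀ w, w ∈ K ∧ S w = w ∧ f w = w → w = z := by
    rintro w ⟨hwK, hSw, hfw⟩
    have h := hcontr z hzK w hwK
    rw [hSz, hfz, hSw, hfw, dist_self, dist_self] at h
    have hnn : (0:ℝ) ≤ dist z w := dist_nonneg
    have harg : max (max (dist z w) 0) (max 0 ((dist z w + dist z w) / 2)) ≤ dist z w := by
      apply max_le (max_le le_rfl hnn) (max_le hnn (by linarith))
    have hargnn : (0:ℝ) ≤ max (max (dist z w) 0) (max 0 ((dist z w + dist z w) / 2)) :=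
      le_max_of_le_left (le_max_of_le_left hnn)
    have hle : dist z w ≤ φ (dist z w) := h.trans (hmono' _ _ hargnn harg)
    exact (dist_eq_zero.mp (hzero _ hnn hle)).symm
  refine ⟨z, ⟨hzK, hSz, hfz⟩, huniq, ?_⟩
  intro hTf
  have hTz : T z = z := by
    have hcomm := hTf z hzK hSz hfz
    rw [hfz] at hcomm
    have hTzK : T z ∈ K := hT hzK
    have hSTz : S (T z) = T z := by
      rw [hS]
      rw [← Function.iterate_succ_apply, Function.iterate_succ_apply']
      rw [← hS, hSz]
    exact huniq (T z) ⟨hTzK, hSTz, hcomm.symm⟩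
  refine ⟨hTz, hfz, ?_⟩
  rintro w ⟨hwK, hTw, hfw⟩
  have hSw : S w = w := by rw [hS]; exact Function.iterate_fixed hTw m
  exact huniq w ⟨hwK, hSw, hfw⟩
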